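/- Any finite set of points in ℝ^2 that can be correctly dichotomised by a classifier whose positive region is an open strip between two parallel lines can also be correctly dichotomised by a classifier whose positive region is the intersection of two non-parallel open half-planes. -/

import Mathlib

noncomputable section
open scoped RealInnerProductSpace

/-- `d`-dimensional Euclidean space. -/
abbrev Euc (d : ℕ) := EuclideanSpace ℝ (Fin d)

/-- Any finite labelled set of points in `ℝ²` that is correctly dichotomised
by a strip classifier (positive region the open strip between two distinct
parallel lines) is also correctly dichotomised by a 2-gon classifier (positive
region the intersection of two open half-planes whose bounding lines are not
parallel, i.e. whose normals are not collinear). -/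
theorem strip_dichotomy_implies_digon_dichotomy
    (S : Finset (Euc 2)) (g : Euc 2 → Bool)
    (w : Euc 2) (hw : w ≠ 0) (t₁ t₂ : ℝ) (ht : t₁ < t₂)
    (hstrip : ∀ x ∈ S, g x = true ↔ t₁ < ⟪w, x⟫ ∧ ⟪w, x⟫ < t₂) :
    ∃ (w₁ w₂ : Euc 2) (c₁ c₂ : ℝ), w₁ ≠ 0 ∧ w₂ ≠ 0 ∧
      (¬ ∃ r : ℝ, w₂ = r • w₁) ∧
      ∀ x ∈ S, g x = true ↔ (⟪w₁, x⟫ < c₁ ∧ ⟪w₂, x⟫ < c₂) := by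
  classical
  -- a vector perpendicular to w
  set u : Euc 2 := (-(w 1)) • EuclideanSpace.single 0 (1:ℝ)
      + (w 0) • EuclideanSpace.single 1 (1:ℝ) with hu
  have hux : ∀ x : Euc 2, ⟪u, x⟫ = -(w 1) * x 0 + w 0 * x 1 := by
    intro x
    simp [hu, inner_add_left, real_inner_smul_left,
      EuclideanSpace.inner_single_left]
  have huw : ⟪u, w⟫ = 0 := by rw [hux]; ring
  have hww : ⟪w, w⟫ = w 0 * w 0 + w 1 * w 1 := by
    simp [PiLp.inner_apply, RCLike.inner_apply, Fin.sum_univ_two]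
    rw [EuclideanSpace.norm_sq_eq]; simp [Fin.sum_univ_two, sq]
  have hu0 : u 0 = -(w 1) := by simp [hu, EuclideanSpace.single_apply]
  have hu1 : u 1 = w 0 := by simp [hu, EuclideanSpace.single_apply]
  have huu : ⟪u, u⟫ = ⟪w, w⟫ := by rw [hux, hu0, hu1, hww]; ring
  have hupos : (0:ℝ) < ⟪u, u⟫ := by
    rw [huu]
    by_contra h
    push_neg at h
    exact hw (real_inner_self_nonpos.mp h)
  -- margin δ
  obtain ⟨δ, hδpos, hδle, hδ⟩ :
      ∃ δ : ℝ, 0 < δ ∧ δ ≤ t₂ - t₁ ∧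
        ∀ x ∈ S, t₁ < ⟪w, x⟫ → t₁ + δ ≤ ⟪w, x⟫ := by
    by_cases hT : (S.filter fun x => t₁ < ⟪w, x⟫).Nonempty
    · refine ⟨min (t₂ - t₁)
        ((S.filter fun x => t₁ < ⟪w, x⟫).inf' hT fun x => ⟪w, x⟫ - t₁),
        ?_, min_le_left _ _, ?_⟩
      · refine lt_min (by linarith) ?_
        rw [Finset.lt_inf'_iff]
        intro b hb
        have := (Finset.mem_filter.mp hb).2
        linarith
      · intro x hx hlt
        have hxf : x ∈ S.filter fun x => t₁ < ⟪w, x⟫ :=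
          Finset.mem_filter.mpr ⟨hx, hlt⟩
        have h1 := Finset.inf'_le (fun x => ⟪w, x⟫ - t₁) hxf
        have h2 := min_le_right (t₂ - t₁)
          ((S.filter fun x => t₁ < ⟪w, x⟫).inf' hT fun x => ⟪w, x⟫ - t₁)
        linarith
    · refine ⟨t₂ - t₁, by linarith, le_refl _, ?_⟩
      intro x hx hlt
      exact absurd ⟨x, Finset.mem_filter.mpr ⟨hx, hlt⟩⟩ hT
  -- bound on perpendicular components
  set M : ℝ := 1 + ∑ x ∈ S, |⟪u, x⟫| with hM
  have hMpos : (0:ℝ) < M := by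
    have : (0:ℝ) ≤ ∑ x ∈ S, |⟪u, x⟫| :=
      Finset.sum_nonneg fun x _ => abs_nonneg _
    rw [hM]; linarith
  have hMb : ∀ x ∈ S, |⟪u, x⟫| ≤ M := by
    intro x hx
    have := Finset.single_le_sum (f := fun x => |⟪u, x⟫|)
      (fun y _ => abs_nonneg _) hx
    rw [hM]; linarith
  set ε : ℝ := δ / (4 * M) with hε
  have hεpos : 0 < ε := by
    rw [hε]; positivity
  have hεM : ε * M = δ / 4 := by
    rw [hε]; field_simp
  set w₂ : Euc 2 := ε • u - w with hw₂
  have h2 : ∀ x : Euc 2, ⟪w₂, x⟫ = ε * ⟪u, x⟫ - ⟪w, x⟫ := by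
    intro x
    rw [hw₂, inner_sub_left, real_inner_smul_left]
  have hwu : ⟪w, u⟫ = (0:ℝ) := by rw [real_inner_comm]; exact huw
  have hw₂u : ⟪w₂, u⟫ = ε * ⟪u, u⟫ := by
    rw [h2, hwu]; ring
  refine ⟨w, w₂, t₂, -t₁ - δ/2, hw, ?_, ?_, ?_⟩
  · intro h0
    have : ⟪w₂, u⟫ = 0 := by rw [h0, inner_zero_left]
    rw [hw₂u] at this
    nlinarith
  · rintro ⟨r, hr⟩
    have : ⟪w₂, u⟫ = r * ⟪w, u⟫ := by rw [hr, real_inner_smul_left]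
    rw [hw₂u, hwu] at this
    nlinarith
  · intro x hx
    rw [hstrip x hx]
    constructor
    · rintro ⟨hlo, hhi⟩
      refine ⟨hhi, ?_⟩
      have hge : t₁ + δ ≤ ⟪w, x⟫ := hδ x hx hlo
      have hb : ε * ⟪u, x⟫ ≤ ε * M :=
        mul_le_mul_of_nonneg_left
          (le_trans (le_abs_self _) (hMb x hx)) (le_of_lt hεpos)
      rw [h2]
      rw [hεM] at hb
      linarith
    · rintro ⟨hhi, hb⟩
      refine ⟨?_, hhi⟩
      by_contra hcon
      push_neg at hcon
      have hb' : -(ε * M) ≤ ε * ⟪u, x⟫ := by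
        have := neg_abs_le (⟪u, x⟫)
        have := mul_le_mul_of_nonneg_left
          (neg_le_neg (hMb x hx)) (le_of_lt hεpos)
        nlinarith [hMb x hx, neg_abs_le (⟪u, x⟫)]
      rw [hεM] at hb'
      rw [h2] at hb
      linarith
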